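/- Let M be a 3-array of perfect matchings of a cubic graph G. Then the set of doubly and triply covered edges forms a perfect matching of the core of M; consequently, the number of uncovered edges equals the number of doubly covered edges plus twice the number of triply covered edges. -/

import Mathlib

open SimpleGraph

variable {V : Type} [Fintype V] [DecidableEq V]

/-- A cubic graph: every vertex has exactly three neighbours. -/
def IsCubic (G : SimpleGraph V) : Prop := ∀ v : V, (G.neighborSet v).ncard = 3

/-- A proper 3-edge-colouring: adjacent (distinct, vertex-sharing) edges get distinct colours. -/
def ProperEdgeColoring (G : SimpleGraph V) (c : Sym2 V → Fin 3) : Prop :=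
  ∀ e₁ ∈ G.edgeSet, ∀ e₂ ∈ G.edgeSet, e₁ ≠ e₂ → (∃ v : V, v ∈ e₁ ∧ v ∈ e₂) → c e₁ ≠ c e₂

def ThreeEdgeColorable (G : SimpleGraph V) : Prop :=
  ∃ c : Sym2 V → Fin 3, ProperEdgeColoring G c

/-- 2-connectedness: at least 3 vertices, connected, and deleting any vertex leaves it connected. -/
def TwoConnected (G : SimpleGraph V) : Prop :=
  3 ≤ Fintype.card V ∧ G.Connected ∧
    ∀ v : V, ((⊤ : G.Subgraph).deleteVerts {v}).coe.Connected

/-- A snark: a 2-connected cubic graph with no proper 3-edge-colouring. -/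
def IsSnark (G : SimpleGraph V) : Prop :=
  IsCubic G ∧ TwoConnected G ∧ ¬ ThreeEdgeColorable G

/-- The set of edges left uncovered by a 3-array of perfect matchings. -/
def uncovered (G : SimpleGraph V) (M : Fin 3 → G.Subgraph) : Set (Sym2 V) :=
  {e | e ∈ G.edgeSet ∧ ∀ i, e ∉ (M i).edgeSet}

/-- The colouring defect: minimum number of uncovered edges over all 3-arrays. -/
noncomputable def defect (G : SimpleGraph V) : ℕ :=
  sInf {n : ℕ | ∃ M : Fin 3 → G.Subgraph,
    (∀ i, (M i).IsPerfectMatching) ∧ n = (uncovered G M).ncard}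

/-- The number of matchings of the 3-array containing a given edge. -/
noncomputable def coverCount (G : SimpleGraph V) (M : Fin 3 → G.Subgraph)
    (e : Sym2 V) : ℕ :=
  {i : Fin 3 | e ∈ (M i).edgeSet}.ncard

/-- The edge set of the core: edges of `G` not simply covered. -/
def coreEdges (G : SimpleGraph V) (M : Fin 3 → G.Subgraph) : Set (Sym2 V) :=
  {e | e ∈ G.edgeSet ∧ coverCount G M e ≠ 1}

/-- The core of a 3-array, as a graph on `V`. -/
def coreGraph (G : SimpleGraph V) (M : Fin 3 → G.Subgraph) : SimpleGraph V where
  Adj u w := G.Adj u w ∧ coverCount G M s(u, w) ≠ 1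
  symm := by
    constructor
    intro u w h
    refine ⟨h.1.symm, ?_⟩
    rw [Sym2.eq_swap]
    exact h.2
  loopless := by
    constructor
    intro v h
    exact G.ne_of_adj h.1 rfl


section AuxStmt6

open Finset
open scoped Classical

noncomputable def myPartner (G : SimpleGraph V) (M : Fin 3 → G.Subgraph)
    (hM : ∀ i, (M i).IsPerfectMatching) (i : Fin 3) (v : V) : V :=
  ((hM i).1 ((hM i).2 v)).choose

lemma myPartner_adj (G : SimpleGraph V) (M : Fin 3 → G.Subgraph)
    (hM : ∀ i, (M i).IsPerfectMatching) (i : Fin 3) (v : V) :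
    (M i).Adj v (myPartner G M hM i v) :=
  ((hM i).1 ((hM i).2 v)).choose_spec.1

lemma myAdj_iff (G : SimpleGraph V) (M : Fin 3 → G.Subgraph)
    (hM : ∀ i, (M i).IsPerfectMatching) (i : Fin 3) (v w : V) :
    (M i).Adj v w ↔ w = myPartner G M hM i v := by
  constructor
  · intro h; exact ((hM i).1 ((hM i).2 v)).choose_spec.2 w h
  · rintro rfl; exact myPartner_adj G M hM i v

lemma coverCount_eq (G : SimpleGraph V) (M : Fin 3 → G.Subgraph)
    (hM : ∀ i, (M i).IsPerfectMatching) (v w : V) :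
    coverCount G M s(v,w)
      = #(univ.filter fun i : Fin 3 => myPartner G M hM i v = w) := by
  have h : {i : Fin 3 | s(v,w) ∈ (M i).edgeSet}
      = ↑(univ.filter fun i : Fin 3 => myPartner G M hM i v = w) := by
    ext i
    simp [SimpleGraph.Subgraph.mem_edgeSet, myAdj_iff G M hM i v w, eq_comm]
  rw [coverCount, h, Set.ncard_coe_finset]

lemma card_nbr (G : SimpleGraph V) (hG : IsCubic G) (v : V) :
    #(G.neighborFinset v) = 3 := by
  rw [neighborFinset, ← Set.ncard_eq_toFinset_card']
  exact hG v

lemma partner_mem_nbr (G : SimpleGraph V) (M : Fin 3 → G.Subgraph)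
    (hM : ∀ i, (M i).IsPerfectMatching) (i : Fin 3) (v : V) :
    myPartner G M hM i v ∈ G.neighborFinset v := by
  rw [mem_neighborFinset]
  exact (M i).adj_sub (myPartner_adj G M hM i v)

lemma sum_fib (G : SimpleGraph V) (hG : IsCubic G) (M : Fin 3 → G.Subgraph)
    (hM : ∀ i, (M i).IsPerfectMatching) (v : V) :
    ∑ w ∈ G.neighborFinset v,
      #(univ.filter fun i : Fin 3 => myPartner G M hM i v = w) = 3 := by
  rw [← Finset.card_eq_sum_card_fiberwise (fun i _ => partner_mem_nbr G M hM i v)]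
  simp

lemma local_identity (G : SimpleGraph V) (hG : IsCubic G) (M : Fin 3 → G.Subgraph)
    (hM : ∀ i, (M i).IsPerfectMatching) (v : V) (fib : V → ℕ)
    (hfib : ∀ w, fib w = #(univ.filter fun i : Fin 3 => myPartner G M hM i v = w)) :
    #((G.neighborFinset v).filter fun w => fib w = 0)
      = #((G.neighborFinset v).filter fun w => fib w = 2)
        + 2 * #((G.neighborFinset v).filter fun w => fib w = 3) := by
  set N := G.neighborFinset v with hN
  have hfible : ∀ w, fib w ≤ 3 := by
    intro w
    rw [hfib]
    calc #(univ.filter fun i : Fin 3 => myPartner G M hM i v = w)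
        ≤ #(univ : Finset (Fin 3)) := card_filter_le _ _
    _ = 3 := by simp
  have eq1 : #N = ∑ k ∈ range 4, #(N.filter fun w => fib w = k) :=
    Finset.card_eq_sum_card_fiberwise (fun w _ => mem_range.mpr (Nat.lt_succ_of_le (hfible w)))
  have eq2 : ∑ k ∈ range 4, ∑ w ∈ N.filter (fun w => fib w = k), fib w = ∑ w ∈ N, fib w :=
    Finset.sum_fiberwise_of_maps_to (fun w _ => mem_range.mpr (Nat.lt_succ_of_le (hfible w))) _
  have inner : ∀ k, ∑ w ∈ N.filter (fun w => fib w = k), fib w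
      = #(N.filter fun w => fib w = k) * k := by
    intro k
    rw [Finset.sum_congr rfl (fun w hw => (mem_filter.mp hw).2), Finset.sum_const, smul_eq_mul]
  have hsum : ∑ w ∈ N, fib w = 3 := by
    rw [show (∑ w ∈ N, fib w) = ∑ w ∈ N, #(univ.filter fun i : Fin 3 => myPartner G M hM i v = w)
      from Finset.sum_congr rfl (fun w _ => hfib w)]
    exact sum_fib G hG M hM v
  have hcard : #N = 3 := card_nbr G hG v
  simp only [Finset.sum_range_succ, Finset.sum_range_zero, inner] at eq1 eq2
  omega

/-- The subgraph of `G` consisting of edges with cover count exactly `k`. -/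
def levelGraph (G : SimpleGraph V) (M : Fin 3 → G.Subgraph) (k : ℕ) : SimpleGraph V where
  Adj u w := G.Adj u w ∧ coverCount G M s(u, w) = k
  symm := ⟨fun u w h => ⟨h.1.symm, by rw [Sym2.eq_swap]; exact h.2⟩⟩
  loopless := ⟨fun v h => G.ne_of_adj h.1 rfl⟩

lemma level_edgeSet (G : SimpleGraph V) (M : Fin 3 → G.Subgraph) (k : ℕ) :
    (levelGraph G M k).edgeSet = {e ∈ G.edgeSet | coverCount G M e = k} := by
  ext e
  induction e using Sym2.ind with
  | _ u w => simp [levelGraph, Set.mem_setOf_eq, SimpleGraph.mem_edgeSet]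

lemma level_nbr (G : SimpleGraph V) (M : Fin 3 → G.Subgraph)
    (hM : ∀ i, (M i).IsPerfectMatching) (k : ℕ) (v : V) :
    (levelGraph G M k).neighborFinset v
      = (G.neighborFinset v).filter
          (fun w => #(univ.filter fun i : Fin 3 => myPartner G M hM i v = w) = k) := by
  ext w
  rw [mem_neighborFinset, mem_filter, mem_neighborFinset]
  show (G.Adj v w ∧ coverCount G M s(v, w) = k) ↔ _
  rw [coverCount_eq G M hM v w]

lemma ncard_level (G : SimpleGraph V) (M : Fin 3 → G.Subgraph) (k : ℕ) :
    {e ∈ G.edgeSet | coverCount G M e = k}.ncard = #(levelGraph G M k).edgeFinset := by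
  rw [← level_edgeSet, Set.ncard_eq_toFinset_card']
  congr 1

lemma double_count (G : SimpleGraph V) (M : Fin 3 → G.Subgraph)
    (hM : ∀ i, (M i).IsPerfectMatching) (k : ℕ) :
    ∑ v : V, #((G.neighborFinset v).filter
        (fun w => #(univ.filter fun i : Fin 3 => myPartner G M hM i v = w) = k))
      = 2 * {e ∈ G.edgeSet | coverCount G M e = k}.ncard := by
  rw [ncard_level G M k, ← SimpleGraph.sum_degrees_eq_twice_card_edges]
  refine Finset.sum_congr rfl fun v _ => ?_
  rw [SimpleGraph.degree, level_nbr G M hM k v]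

end AuxStmt6

theorem stmt_6 (G : SimpleGraph V) (hG : IsCubic G)
    (M : Fin 3 → G.Subgraph) (hM : ∀ i, (M i).IsPerfectMatching) :
    (∀ v : V, (∃ e ∈ coreEdges G M, v ∈ e) →
      {e ∈ coreEdges G M | v ∈ e ∧ 2 ≤ coverCount G M e}.ncard = 1) ∧
    {e ∈ G.edgeSet | coverCount G M e = 0}.ncard =
      {e ∈ G.edgeSet | coverCount G M e = 2}.ncard +
        2 * {e ∈ G.edgeSet | coverCount G M e = 3}.ncard := by
  classical
  constructor
  · -- part 1
    rintro v ⟨e, ⟨heG, hne1⟩, hve⟩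
    obtain ⟨w0, rfl⟩ := Sym2.mem_iff_exists.mp hve
    set fib : V → ℕ :=
      fun w => (Finset.univ.filter fun i : Fin 3 => myPartner G M hM i v = w).card with hfibdef
    have hfib : ∀ w, coverCount G M s(v, w) = fib w := fun w => coverCount_eq G M hM v w
    have hw0 : fib w0 ≠ 1 := by rw [← hfib]; exact hne1
    have hw0N : w0 ∈ G.neighborFinset v := (SimpleGraph.mem_neighborFinset _ _ _).mpr heG
    have hsum : ∑ w ∈ G.neighborFinset v, fib w = 3 := sum_fib G hG M hM v
    -- existence of a vertex with fiber ≥ 2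
    have hex : ∃ w, 2 ≤ fib w := by
      by_contra hcon
      push_neg at hcon
      have hlt : ∑ w ∈ G.neighborFinset v, fib w < ∑ w ∈ G.neighborFinset v, 1 := by
        refine Finset.sum_lt_sum (fun w _ => by have := hcon w; omega) ⟨w0, hw0N, ?_⟩
        have := hcon w0; omega
      rw [hsum, Finset.sum_const, smul_eq_mul, mul_one, card_nbr G hG v] at hlt
      omega
    obtain ⟨wstar, hwstar⟩ := hex
    -- uniqueness
    have huniq : ∀ w, 2 ≤ fib w → w = wstar := by
      intro w hw
      by_contra hne
      have hdisj : Disjoint (Finset.univ.filter fun i : Fin 3 => myPartner G M hM i v = w)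
          (Finset.univ.filter fun i : Fin 3 => myPartner G M hM i v = wstar) := by
        rw [Finset.disjoint_filter]
        intro i _ h1 h2
        exact hne (h1 ▸ h2 ▸ rfl)
      have := Finset.card_union_of_disjoint hdisj
      have hle : ((Finset.univ.filter fun i : Fin 3 => myPartner G M hM i v = w)
          ∪ (Finset.univ.filter fun i : Fin 3 => myPartner G M hM i v = wstar)).card
          ≤ (Finset.univ : Finset (Fin 3)).card := Finset.card_le_univ _
      simp only [Finset.card_univ, Fintype.card_fin] at hle
      rw [this] at hle
      have h1 : 2 ≤ (Finset.univ.filter fun i : Fin 3 => myPartner G M hM i v = w).card := hw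
      have h2 : 2 ≤ (Finset.univ.filter fun i : Fin 3 => myPartner G M hM i v = wstar).card := hwstar
      omega
    -- the adjacency of wstar
    have hadj : G.Adj v wstar := by
      have hpos : 0 < fib wstar := by omega
      rw [Finset.card_pos] at hpos
      obtain ⟨i, hi⟩ := hpos
      rw [Finset.mem_filter] at hi
      exact hi.2 ▸ (M i).adj_sub (myPartner_adj G M hM i v)
    have hset : {e ∈ coreEdges G M | v ∈ e ∧ 2 ≤ coverCount G M e} = {s(v, wstar)} := by
      ext e
      simp only [Set.mem_setOf_eq, Set.mem_singleton_iff]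
      constructor
      · rintro ⟨⟨heG', -⟩, hve', h2⟩
        obtain ⟨w, rfl⟩ := Sym2.mem_iff_exists.mp hve'
        rw [hfib w] at h2
        rw [huniq w h2]
      · rintro rfl
        refine ⟨⟨hadj, ?_⟩, Sym2.mem_mk_left v wstar, ?_⟩
        · rw [hfib]; omega
        · rw [hfib]; exact hwstar
    rw [hset, Set.ncard_singleton]
  · -- part 2
    have h0 := double_count G M hM 0
    have h2 := double_count G M hM 2
    have h3 := double_count G M hM 3
    have hloc : ∑ v : V, ((G.neighborFinset v).filter
        (fun w => (Finset.univ.filter fun i : Fin 3 => myPartner G M hM i v = w).card = 0)).card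
      = ∑ v : V, (((G.neighborFinset v).filter
          (fun w => (Finset.univ.filter fun i : Fin 3 => myPartner G M hM i v = w).card = 2)).card
        + 2 * ((G.neighborFinset v).filter
          (fun w => (Finset.univ.filter fun i : Fin 3 => myPartner G M hM i v = w).card = 3)).card) :=
      Finset.sum_congr rfl fun v _ => local_identity G hG M hM v _ (fun _ => rfl)
    rw [Finset.sum_add_distrib, ← Finset.mul_sum] at hloc
    rw [h0, h2, h3] at hloc
    omega
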